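/- arXiv:1703.06985 — 2 statements merged into one kernel-verified Lean document; each statement's English description precedes it below -/
import Mathlib

section
/- Let L be a b×b strictly lower triangular random matrix with jointly independent entries below the diagonal satisfying E[l_{ij}] = 0, E[l_{ij}^2] = 1, E[l_{ij}^4] = 3. Then E[tr(L Lᵀ L Lᵀ)] = (4b^3 − 3b^2 − b)/6. -/
open MeasureTheory ProbabilityTheory Matrix Finset

private lemma sum_ind_lt' {b : ℕ} (i : Fin b) :
    (∑ j : Fin b, if j < i then (1:ℝ) else 0) = i.val := by
  rw [Finset.sum_boole]
  have : univ.filter (fun j => j < i) = Iio i := by ext j; simp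
  rw [this, Fin.card_Iio]

private lemma sum_ind_gt' {b : ℕ} (j : Fin b) :
    (∑ i : Fin b, if j < i then (1:ℝ) else 0) = b - 1 - j.val := by
  rw [Finset.sum_boole]
  have : univ.filter (fun i => j < i) = Ioi j := by ext i; simp
  rw [this, Fin.card_Ioi]
  have hj := j.2
  rw [Nat.cast_sub (by omega), Nat.cast_sub (by omega)]
  norm_num

private lemma sum_reflect_sq' (b : ℕ) :
    (∑ j : Fin b, ((b:ℝ) - 1 - j.val)^2) = ∑ i : Fin b, ((i:ℝ))^2 := by
  rw [Fin.sum_univ_eq_sum_range (fun j => ((b:ℝ) - 1 - j)^2),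
      Fin.sum_univ_eq_sum_range (fun j => ((j:ℝ))^2), ← Finset.sum_range_reflect]
  apply Finset.sum_congr rfl
  intro j hj
  simp only [Finset.mem_range] at hj
  rw [Nat.cast_sub (by omega), Nat.cast_sub (by omega)]
  push_cast; ring

private lemma sum_closed' (b : ℕ) :
    (∑ i : Fin b, (2 * ((i:ℝ))^2 + i)) = (4 * (b : ℝ) ^ 3 - 3 * (b : ℝ) ^ 2 - (b : ℝ)) / 6 := by
  rw [Fin.sum_univ_eq_sum_range (fun i => 2*((i:ℝ))^2 + i)]
  induction b with
  | zero => simp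
  | succ m ih => rw [Finset.sum_range_succ, ih]; push_cast; ring

noncomputable def ccMoment {b : ℕ} (i k j l : Fin b) : ℝ :=
  if j < i ∧ j < k ∧ l < i ∧ l < k then
    ((if i = k then (1:ℝ) else 0) + (if j = l then 1 else 0) +
      (if i = k ∧ j = l then 1 else 0))
  else 0

private lemma ccMoment_decomp {b : ℕ} (i k j l : Fin b) :
    ccMoment i k j l =
      (if i = k then (1:ℝ) else 0) * ((if j < i then (1:ℝ) else 0) * (if l < i then 1 else 0))
      + (if j = l then (1:ℝ) else 0) * ((if j < i then (1:ℝ) else 0) * (if j < k then 1 else 0))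
      + ((if i = k then (1:ℝ) else 0) * (if j < i then 1 else 0)) * (if j = l then 1 else 0) := by
  unfold ccMoment
  by_cases hik : i = k <;> by_cases hjl : j = l <;>
    simp only [hik, hjl, if_pos rfl, and_self, true_and, and_true] <;>
    split_ifs <;> simp_all

private lemma ccMoment_sum (b : ℕ) :
    (∑ i : Fin b, ∑ k : Fin b, ∑ j : Fin b, ∑ l : Fin b, ccMoment i k j l)
      = (4 * (b : ℝ) ^ 3 - 3 * (b : ℝ) ^ 2 - (b : ℝ)) / 6 := by
  simp_rw [ccMoment_decomp, Finset.sum_add_distrib]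
  have S1 : (∑ i : Fin b, ∑ k : Fin b, ∑ j : Fin b, ∑ l : Fin b,
      (if i = k then (1:ℝ) else 0) * ((if j < i then (1:ℝ) else 0) * (if l < i then 1 else 0)))
      = ∑ i : Fin b, ((i:ℝ))^2 := by
    apply Finset.sum_congr rfl; intro i _
    simp only [← Finset.mul_sum, ← Finset.sum_mul, sum_ind_lt']
    simp [Finset.sum_ite_eq, sq]
  have S2 : (∑ i : Fin b, ∑ k : Fin b, ∑ j : Fin b, ∑ l : Fin b,
      (if j = l then (1:ℝ) else 0) * ((if j < i then (1:ℝ) else 0) * (if j < k then 1 else 0)))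
      = ∑ i : Fin b, ((i:ℝ))^2 := by
    have h1 : ∀ i k : Fin b, (∑ j : Fin b, ∑ l : Fin b,
        (if j = l then (1:ℝ) else 0) * ((if j < i then (1:ℝ) else 0) * (if j < k then 1 else 0)))
        = ∑ j : Fin b, (if j < i then (1:ℝ) else 0) * (if j < k then 1 else 0) := by
      intro i k
      apply Finset.sum_congr rfl; intro j _
      rw [← Finset.sum_mul]
      simp [Finset.sum_ite_eq]
    simp_rw [h1]
    rw [show (∑ i : Fin b, ∑ k : Fin b, ∑ j : Fin b,
        (if j < i then (1:ℝ) else 0) * (if j < k then 1 else 0))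
        = ∑ j : Fin b, ∑ i : Fin b, ∑ k : Fin b,
        (if j < i then (1:ℝ) else 0) * (if j < k then 1 else 0) from by
      calc (∑ i : Fin b, ∑ k : Fin b, ∑ j : Fin b,
            (if j < i then (1:ℝ) else 0) * (if j < k then 1 else 0))
          = ∑ i : Fin b, ∑ j : Fin b, ∑ k : Fin b,
            (if j < i then (1:ℝ) else 0) * (if j < k then 1 else 0) :=
            Finset.sum_congr rfl (fun i _ => Finset.sum_comm)
        _ = ∑ j : Fin b, ∑ i : Fin b, ∑ k : Fin b,
            (if j < i then (1:ℝ) else 0) * (if j < k then 1 else 0) := Finset.sum_comm]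
    have h2 : ∀ j : Fin b, (∑ i : Fin b, ∑ k : Fin b,
        (if j < i then (1:ℝ) else 0) * (if j < k then 1 else 0))
        = ((b:ℝ) - 1 - j.val)^2 := by
      intro j
      simp only [← Finset.mul_sum, ← Finset.sum_mul, sum_ind_gt']
      ring
    simp_rw [h2, sum_reflect_sq']
  have S3 : (∑ i : Fin b, ∑ k : Fin b, ∑ j : Fin b, ∑ l : Fin b,
      ((if i = k then (1:ℝ) else 0) * (if j < i then 1 else 0)) * (if j = l then 1 else 0))
      = ∑ i : Fin b, ((i:ℝ)) := by
    apply Finset.sum_congr rfl; intro i _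
    have h1 : ∀ k j : Fin b, (∑ l : Fin b,
        ((if i = k then (1:ℝ) else 0) * (if j < i then 1 else 0)) * (if j = l then 1 else 0))
        = (if i = k then (1:ℝ) else 0) * (if j < i then 1 else 0) := by
      intro k j
      rw [← Finset.mul_sum]
      simp [Finset.sum_ite_eq]
    simp_rw [h1, ← Finset.mul_sum, sum_ind_lt']
    simp [Finset.sum_ite_eq]
  rw [S1, S2, S3, ← sum_closed']
  rw [← Finset.sum_add_distrib, ← Finset.sum_add_distrib]
  apply Finset.sum_congr rfl; intro i _; ring

/-- For a b×b strictly lower triangular random matrix with independent entries below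
the diagonal matching Gaussian second and fourth moments,
E[tr(L Lᵀ L Lᵀ)] = (4b³−3b²−b)/6. -/
theorem expectation_trace_LLTLLT
    {Ω : Type*} [MeasureSpace Ω] [IsProbabilityMeasure (ℙ : Measure Ω)]
    (b : ℕ) (L : Ω → Matrix (Fin b) (Fin b) ℝ)
    (hmeas : ∀ i j, Measurable fun ω => L ω i j)
    (hlow : ∀ ω, ∀ i j : Fin b, i ≤ j → L ω i j = 0)
    (hindep : iIndepFun
      (fun p : {p : Fin b × Fin b // p.2 < p.1} => fun ω => L ω p.1.1 p.1.2) ℙ)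
    (hmean : ∀ i j : Fin b, j < i → ∫ ω, L ω i j = 0)
    (hvar : ∀ i j : Fin b, j < i → ∫ ω, (L ω i j) ^ 2 = 1)
    (hfourth : ∀ i j : Fin b, j < i → ∫ ω, (L ω i j) ^ 4 = 3) :
    ∫ ω, Matrix.trace (L ω * (L ω)ᵀ * (L ω * (L ω)ᵀ))
      = (4 * (b : ℝ) ^ 3 - 3 * (b : ℝ) ^ 2 - (b : ℝ)) / 6 := by
  -- integrability of powers of entries
  have hI4 : ∀ i j : Fin b, j < i → Integrable (fun ω => (L ω i j)^4) ℙ := by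
    intro i j h
    by_contra hc
    have h4 := hfourth i j h
    rw [integral_undef hc] at h4
    norm_num at h4
  have hI2 : ∀ i j : Fin b, j < i → Integrable (fun ω => (L ω i j)^2) ℙ := by
    intro i j h
    refine Integrable.mono' ((hI4 i j h).add (integrable_const 1))
      (((hmeas i j).pow_const 2).aestronglyMeasurable) (Filter.Eventually.of_forall fun ω => ?_)
    simp only [Pi.add_apply]
    rw [Real.norm_eq_abs, abs_of_nonneg (sq_nonneg _)]
    nlinarith [sq_nonneg ((L ω i j)^2 - 1), sq_nonneg (L ω i j)]
  have hI1 : ∀ i j : Fin b, j < i → Integrable (fun ω => L ω i j) ℙ := by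
    intro i j h
    refine Integrable.mono' ((hI2 i j h).add (integrable_const 1))
      ((hmeas i j).aestronglyMeasurable) (Filter.Eventually.of_forall fun ω => ?_)
    simp only [Pi.add_apply]
    rw [Real.norm_eq_abs]
    nlinarith [sq_nonneg (|L ω i j| - 1), abs_nonneg (L ω i j), sq_abs (L ω i j)]
  -- measurability of the family
  have hmeasX : ∀ p : {p : Fin b × Fin b // p.2 < p.1},
      Measurable (fun ω => L ω p.1.1 p.1.2) := fun p => hmeas _ _
  -- the generic term: integrability and value of its expectation
  have hterm : ∀ i k j l : Fin b,
      Integrable (fun ω => (L ω i j * L ω k j) * (L ω k l * L ω i l)) ℙ ∧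
      ∫ ω, (L ω i j * L ω k j) * (L ω k l * L ω i l) = ccMoment i k j l := by
    intro i k j l
    by_cases hcond : j < i ∧ j < k ∧ l < i ∧ l < k
    · obtain ⟨hji, hjk, hli, hlk⟩ := hcond
      by_cases hik : i = k <;> by_cases hjl : j = l
      · -- fourth moment
        subst hik; subst hjl
        have he : (fun ω => (L ω i j * L ω i j) * (L ω i j * L ω i j))
            = fun ω => (L ω i j)^4 := by funext ω; ring
        constructor
        · rw [he]; exact hI4 i j hji
        · rw [he, hfourth i j hji]
          simp only [ccMoment, hji, hli, and_self, if_pos rfl, if_true]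
          norm_num
      · -- i = k, j ≠ l : E[X²Y²] = 1
        subst hik
        have hne : (⟨(i,j), hji⟩ : {p : Fin b × Fin b // p.2 < p.1}) ≠ ⟨(i,l), hli⟩ := by
          simp only [ne_eq, Subtype.mk.injEq, Prod.mk.injEq, not_and]
          exact fun _ h => hjl h
        have hind : IndepFun (fun ω => (L ω i j)^2) (fun ω => (L ω i l)^2) ℙ :=
          (hindep.indepFun hne).comp (measurable_id.pow_const 2) (measurable_id.pow_const 2)
        have he : (fun ω => (L ω i j * L ω i j) * (L ω i l * L ω i l))
            = fun ω => (L ω i j)^2 * (L ω i l)^2 := by funext ω; ring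
        have hIntProd : Integrable (fun ω => (L ω i j)^2 * (L ω i l)^2) ℙ :=
          hind.integrable_mul (hI2 i j hji) (hI2 i l hli)
        have hEq : ∫ ω, (L ω i j)^2 * (L ω i l)^2
            = (∫ ω, (L ω i j)^2) * ∫ ω, (L ω i l)^2 :=
          hind.integral_fun_mul_eq_mul_integral (hI2 i j hji).aestronglyMeasurable (hI2 i l hli).aestronglyMeasurable
        constructor
        · rw [he]; exact hIntProd
        · rw [he, hEq, hvar i j hji, hvar i l hli]
          simp [ccMoment, hji, hli, hjl]
      · -- i ≠ k, j = l : E[X²Y²] = 1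
        subst hjl
        have hne : (⟨(i,j), hji⟩ : {p : Fin b × Fin b // p.2 < p.1}) ≠ ⟨(k,j), hjk⟩ := by
          simp only [ne_eq, Subtype.mk.injEq, Prod.mk.injEq, not_and]
          exact fun h => absurd h hik
        have hind : IndepFun (fun ω => (L ω i j)^2) (fun ω => (L ω k j)^2) ℙ :=
          (hindep.indepFun hne).comp (measurable_id.pow_const 2) (measurable_id.pow_const 2)
        have he : (fun ω => (L ω i j * L ω k j) * (L ω k j * L ω i j))
            = fun ω => (L ω i j)^2 * (L ω k j)^2 := by funext ω; ring
        have hIntProd : Integrable (fun ω => (L ω i j)^2 * (L ω k j)^2) ℙ :=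
          hind.integrable_mul (hI2 i j hji) (hI2 k j hjk)
        have hEq : ∫ ω, (L ω i j)^2 * (L ω k j)^2
            = (∫ ω, (L ω i j)^2) * ∫ ω, (L ω k j)^2 :=
          hind.integral_fun_mul_eq_mul_integral (hI2 i j hji).aestronglyMeasurable (hI2 k j hjk).aestronglyMeasurable
        constructor
        · rw [he]; exact hIntProd
        · rw [he, hEq, hvar i j hji, hvar k j hjk]
          simp [ccMoment, hji, hjk, hik]
      · -- all four entries distinct : expectation 0
        have hne12 : (⟨(i,j), hji⟩ : {p : Fin b × Fin b // p.2 < p.1}) ≠ ⟨(k,j), hjk⟩ := by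
          simp only [ne_eq, Subtype.mk.injEq, Prod.mk.injEq, not_and]
          exact fun h => absurd h hik
        have hne34 : (⟨(k,l), hlk⟩ : {p : Fin b × Fin b // p.2 < p.1}) ≠ ⟨(i,l), hli⟩ := by
          simp only [ne_eq, Subtype.mk.injEq, Prod.mk.injEq, not_and]
          exact fun h => absurd h.symm hik
        have hne13 : (⟨(i,j), hji⟩ : {p : Fin b × Fin b // p.2 < p.1}) ≠ ⟨(k,l), hlk⟩ := by
          simp only [ne_eq, Subtype.mk.injEq, Prod.mk.injEq, not_and]
          exact fun h => absurd h hik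
        have hne14 : (⟨(i,j), hji⟩ : {p : Fin b × Fin b // p.2 < p.1}) ≠ ⟨(i,l), hli⟩ := by
          simp only [ne_eq, Subtype.mk.injEq, Prod.mk.injEq, not_and]
          exact fun _ h => hjl h
        have hne23 : (⟨(k,j), hjk⟩ : {p : Fin b × Fin b // p.2 < p.1}) ≠ ⟨(k,l), hlk⟩ := by
          simp only [ne_eq, Subtype.mk.injEq, Prod.mk.injEq, not_and]
          exact fun _ h => hjl h
        have hne24 : (⟨(k,j), hjk⟩ : {p : Fin b × Fin b // p.2 < p.1}) ≠ ⟨(i,l), hli⟩ := by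
          simp only [ne_eq, Subtype.mk.injEq, Prod.mk.injEq, not_and]
          exact fun h => absurd h.symm hik
        have h12 : IndepFun (fun ω => L ω i j) (fun ω => L ω k j) ℙ := hindep.indepFun hne12
        have h34 : IndepFun (fun ω => L ω k l) (fun ω => L ω i l) ℙ := hindep.indepFun hne34
        have hmul : IndepFun (fun ω => L ω i j * L ω k j) (fun ω => L ω k l * L ω i l) ℙ :=
          hindep.indepFun_mul_mul hmeasX _ _ _ _ hne13 hne14 hne23 hne24
        have I12 : Integrable (fun ω => L ω i j * L ω k j) ℙ :=
          h12.integrable_mul (hI1 i j hji) (hI1 k j hjk)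
        have I34 : Integrable (fun ω => L ω k l * L ω i l) ℙ :=
          h34.integrable_mul (hI1 k l hlk) (hI1 i l hli)
        constructor
        · exact hmul.integrable_mul I12 I34
        · have hfull : ∫ ω, (L ω i j * L ω k j) * (L ω k l * L ω i l)
              = (∫ ω, L ω i j * L ω k j) * ∫ ω, L ω k l * L ω i l :=
            hmul.integral_fun_mul_eq_mul_integral I12.aestronglyMeasurable I34.aestronglyMeasurable
          have e12 : ∫ ω, L ω i j * L ω k j = (∫ ω, L ω i j) * ∫ ω, L ω k j :=
            h12.integral_fun_mul_eq_mul_integral (hI1 i j hji).aestronglyMeasurable (hI1 k j hjk).aestronglyMeasurable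
          rw [hfull, e12, hmean i j hji]
          simp [ccMoment, hji, hjk, hli, hlk, hik, hjl]
    · -- some factor is identically zero
      have hz : (fun ω => (L ω i j * L ω k j) * (L ω k l * L ω i l)) = (fun _ => (0:ℝ)) := by
        funext ω
        rcases not_and_or.mp hcond with h | h
        · rw [hlow ω i j (not_lt.mp h)]; ring
        rcases not_and_or.mp h with h | h
        · rw [hlow ω k j (not_lt.mp h)]; ring
        rcases not_and_or.mp h with h | h
        · rw [hlow ω i l (not_lt.mp h)]; ring
        · rw [hlow ω k l (not_lt.mp h)]; ring
      rw [hz]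
      refine ⟨integrable_const 0, ?_⟩
      rw [integral_const]
      simp [ccMoment, hcond]
  -- expand the trace into a quadruple sum
  have htr : ∀ ω, Matrix.trace (L ω * (L ω)ᵀ * (L ω * (L ω)ᵀ))
      = ∑ i : Fin b, ∑ k : Fin b, ∑ j : Fin b, ∑ l : Fin b,
        (L ω i j * L ω k j) * (L ω k l * L ω i l) := by
    intro ω
    simp only [Matrix.trace, Matrix.diag_apply, Matrix.mul_apply, Matrix.transpose_apply,
      Finset.sum_mul, Finset.mul_sum]
    exact Finset.sum_congr rfl fun i _ => Finset.sum_congr rfl fun k _ => Finset.sum_comm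
  calc ∫ ω, Matrix.trace (L ω * (L ω)ᵀ * (L ω * (L ω)ᵀ))
      = ∫ ω, ∑ i : Fin b, ∑ k : Fin b, ∑ j : Fin b, ∑ l : Fin b,
          (L ω i j * L ω k j) * (L ω k l * L ω i l) :=
        integral_congr_ae (Filter.Eventually.of_forall htr)
    _ = ∑ i : Fin b, ∑ k : Fin b, ∑ j : Fin b, ∑ l : Fin b,
          ∫ ω, (L ω i j * L ω k j) * (L ω k l * L ω i l) := by
        rw [integral_finset_sum _ (fun i _ => integrable_finset_sum _ (fun k _ =>
          integrable_finset_sum _ (fun j _ => integrable_finset_sum _ (fun l _ =>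
            (hterm i k j l).1))))]
        refine Finset.sum_congr rfl fun i _ => ?_
        rw [integral_finset_sum _ (fun k _ => integrable_finset_sum _ (fun j _ =>
          integrable_finset_sum _ (fun l _ => (hterm i k j l).1)))]
        refine Finset.sum_congr rfl fun k _ => ?_
        rw [integral_finset_sum _ (fun j _ =>
          integrable_finset_sum _ (fun l _ => (hterm i k j l).1))]
        refine Finset.sum_congr rfl fun j _ => ?_
        exact integral_finset_sum _ (fun l _ => (hterm i k j l).1)
    _ = ∑ i : Fin b, ∑ k : Fin b, ∑ j : Fin b, ∑ l : Fin b, ccMoment i k j l := by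
        refine Finset.sum_congr rfl fun i _ => Finset.sum_congr rfl fun k _ =>
          Finset.sum_congr rfl fun j _ => Finset.sum_congr rfl fun l _ => (hterm i k j l).2
    _ = (4 * (b : ℝ) ^ 3 - 3 * (b : ℝ) ^ 2 - (b : ℝ)) / 6 := ccMoment_sum b
end

section
/- Let N = m·b with m ≥ 2 an integer, and let H ~ BWE_{N,b} be a four-moment Gaussian-matching real symmetric banded Wigner matrix of bandwidth b. Then E[tr(H^4)] = (24Nb^2 − 18Nb + 3N − 20b^3 + 27b^2 − 7b)/3. -/
open MeasureTheory ProbabilityTheory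

lemma BWE4_poly_sum (n : ℕ) (A B C : ℝ) :
    ∑ t ∈ Finset.range n, (A*(t:ℝ)^2 + B*(t:ℝ) + C)
      = A*((n:ℝ)*((n:ℝ)-1)*(2*(n:ℝ)-1)/6) + B*((n:ℝ)*((n:ℝ)-1)/2) + C*(n:ℝ) := by
  induction n with
  | zero => simp
  | succ n ih => rw [Finset.sum_range_succ, ih]; push_cast; ring

lemma BWE4_abs4 (w x y z : ℝ) : |w*x*y*z| ≤ w^4+x^4+y^4+z^4 := by
  have h1 : |w*x| ≤ (w^2+x^2)/2 := by
    rw [abs_mul]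
    nlinarith [sq_nonneg (|w|-|x|), sq_abs w, sq_abs x, abs_nonneg w, abs_nonneg x]
  have h2 : |y*z| ≤ (y^2+z^2)/2 := by
    rw [abs_mul]
    nlinarith [sq_nonneg (|y|-|z|), sq_abs y, sq_abs z, abs_nonneg y, abs_nonneg z]
  have h3 : |w*x*y*z| = |w*x| * |y*z| := by rw [mul_assoc, abs_mul]
  rw [h3]
  nlinarith [abs_nonneg (w*x), abs_nonneg (y*z), sq_nonneg (w^2+x^2-y^2-z^2),
    sq_nonneg (w^2-x^2), sq_nonneg (y^2-z^2)]

lemma BWE4_integral_prod {Ω ι : Type*} [MeasureSpace Ω] [IsProbabilityMeasure (ℙ : Measure Ω)]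
    {f : ι → Ω → ℝ} (h : iIndepFun f ℙ)
    (hm : ∀ i, Measurable (f i)) (s : Finset ι) :
    ∫ ω, ∏ q ∈ s, f q ω = ∏ q ∈ s, ∫ ω, f q ω := by
  classical
  induction s using Finset.cons_induction with
  | empty => simp
  | cons i s hi ih =>
    have hip : IndepFun (f i) (∏ j ∈ s, f j) ℙ :=
      (h.indepFun_finsetProd_of_notMem hm hi).symm
    have hmul : ∫ ω, ∏ q ∈ Finset.cons i s hi, f q ω = ∫ ω, (f i * ∏ j ∈ s, f j) ω := by
      congr 1; funext ω; simp [Finset.prod_cons, Finset.prod_insert hi]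
    rw [hmul]
    have hpm : AEStronglyMeasurable (∏ j ∈ s, f j) ℙ := by
      have : (∏ j ∈ s, f j) = fun ω => ∏ j ∈ s, f j ω := by funext ω; simp
      rw [this]
      exact (Finset.measurable_prod s (fun j _ => hm j)).aestronglyMeasurable
    have := hip.integral_mul_eq_mul_integral (hm i).aestronglyMeasurable hpm
    rw [this, Finset.prod_cons, ← ih]
    congr 1
    · congr 1; funext ω; simp

def BWE4_canon {N b : ℕ} (i j : Fin N) (h : |(i:ℤ)-(j:ℤ)| < b) :
    {p : Fin N × Fin N // p.1 ≤ p.2 ∧ |(p.1 : ℤ) - (p.2 : ℤ)| < b} :=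
  if hle : i ≤ j then ⟨(i,j), hle, h⟩ else ⟨(j,i), le_of_not_ge hle, by rwa [abs_sub_comm]⟩

lemma BWE4_canon_eq_iff {N b : ℕ} (i j k l : Fin N) (h1 : |(i:ℤ)-(j:ℤ)| < b)
    (h2 : |(k:ℤ)-(l:ℤ)| < b) :
    BWE4_canon i j h1 = BWE4_canon k l h2 ↔ (i = k ∧ j = l) ∨ (i = l ∧ j = k) := by
  unfold BWE4_canon
  split_ifs with h3 h4 h4 <;>
    simp only [Subtype.mk.injEq, Prod.mk.injEq, Fin.ext_iff] <;>
    simp only [Fin.le_def, not_le] at h3 h4 <;> omega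

lemma BWE4_canon_apply {N b : ℕ} (f : Fin N → Fin N → ℝ) (hf : ∀ a c, f a c = f c a)
    (i j : Fin N) (h : |(i:ℤ)-(j:ℤ)| < b) :
    f (BWE4_canon i j h).1.1 (BWE4_canon i j h).1.2 = f i j := by
  unfold BWE4_canon
  split_ifs
  · rfl
  · exact hf j i

noncomputable def BWE4_E2 (b : ℕ) {N : ℕ} (i j : Fin N) : ℝ :=
  if |(i:ℤ)-(j:ℤ)| < b then 1 else 0

noncomputable def BWE4_T (b : ℕ) {N : ℕ} (i j k l : Fin N) : ℝ :=
  if i = k then (if j = l then 3 * BWE4_E2 b i j else BWE4_E2 b i j * BWE4_E2 b i l)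
  else if j = l then BWE4_E2 b i j * BWE4_E2 b j k else 0

lemma BWE4_E2_symm (b : ℕ) {N : ℕ} (i j : Fin N) : BWE4_E2 b i j = BWE4_E2 b j i := by
  unfold BWE4_E2; rw [abs_sub_comm]

lemma BWE4_E2_idem (b : ℕ) {N : ℕ} (i j : Fin N) :
    BWE4_E2 b i j * BWE4_E2 b i j = BWE4_E2 b i j := by
  unfold BWE4_E2; split_ifs <;> norm_num

lemma BWE4_T_split (b : ℕ) {N : ℕ} (i j k l : Fin N) :
    BWE4_T b i j k l =
      (if k = i then BWE4_E2 b i j * BWE4_E2 b i l else 0)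
      + (if l = j then BWE4_E2 b i j * BWE4_E2 b j k else 0)
      + (if k = i then (if l = j then
          (3 * BWE4_E2 b i j - BWE4_E2 b i j * BWE4_E2 b i l
            - BWE4_E2 b i j * BWE4_E2 b j k) else 0) else 0) := by
  unfold BWE4_T
  rcases eq_or_ne i k with rfl | hik <;> rcases eq_or_ne j l with rfl | hjl
  · simp only [eq_self_iff_true, if_true]; ring
  · simp [hjl, Ne.symm hjl]
  · simp [hik, Ne.symm hik]
  · simp [hik, hjl, Ne.symm hik, Ne.symm hjl]

lemma BWE4_T_sum (b N : ℕ) :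
    ∑ i : Fin N, ∑ l : Fin N, ∑ k : Fin N, ∑ j : Fin N, BWE4_T b i j k l
      = ∑ i : Fin N, (2 * (∑ j : Fin N, BWE4_E2 b i j)^2 + ∑ j : Fin N, BWE4_E2 b i j) := by
  classical
  set d : Fin N → ℝ := fun i => ∑ j, BWE4_E2 b i j with hd
  have hdsym : ∀ i : Fin N, (∑ j, BWE4_E2 b j i) = d i := by
    intro i; simp only [hd]; exact Finset.sum_congr rfl (fun j _ => BWE4_E2_symm b j i)
  simp only [BWE4_T_split, Finset.sum_add_distrib]
  have hS1 : (∑ i : Fin N, ∑ l : Fin N, ∑ k : Fin N, ∑ j : Fin N,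
      (if k = i then BWE4_E2 b i j * BWE4_E2 b i l else 0)) = ∑ i, d i * d i := by
    refine Finset.sum_congr rfl (fun i _ => ?_)
    have inner : ∀ l k : Fin N, (∑ j : Fin N, if k = i then BWE4_E2 b i j * BWE4_E2 b i l else 0)
        = if k = i then d i * BWE4_E2 b i l else 0 := by
      intro l k; split_ifs with h
      · rw [← Finset.sum_mul]
      · simp
    simp only [inner, Finset.sum_ite_eq', Finset.mem_univ, if_true]
    rw [← Finset.mul_sum]
  have hS2 : (∑ i : Fin N, ∑ l : Fin N, ∑ k : Fin N, ∑ j : Fin N,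
      (if l = j then BWE4_E2 b i j * BWE4_E2 b j k else 0)) = ∑ l, d l * d l := by
    have inner : ∀ (i l k : Fin N), (∑ j : Fin N, if l = j then BWE4_E2 b i j * BWE4_E2 b j k else 0)
        = BWE4_E2 b i l * BWE4_E2 b l k := by
      intro i l k
      simp [Finset.sum_ite_eq]
    simp only [inner]
    have inner2 : ∀ (i l : Fin N), (∑ k : Fin N, BWE4_E2 b i l * BWE4_E2 b l k)
        = BWE4_E2 b i l * d l := by
      intro i l; rw [← Finset.mul_sum]
    simp only [inner2]
    rw [Finset.sum_comm]
    refine Finset.sum_congr rfl (fun l _ => ?_)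
    rw [← Finset.sum_mul, hdsym]
  have hS3 : (∑ i : Fin N, ∑ l : Fin N, ∑ k : Fin N, ∑ j : Fin N,
      (if k = i then (if l = j then
          (3 * BWE4_E2 b i j - BWE4_E2 b i j * BWE4_E2 b i l
            - BWE4_E2 b i j * BWE4_E2 b j k) else 0) else 0)) = ∑ i, d i := by
    refine Finset.sum_congr rfl (fun i _ => ?_)
    have inner : ∀ l k : Fin N, (∑ j : Fin N, if k = i then (if l = j then
          (3 * BWE4_E2 b i j - BWE4_E2 b i j * BWE4_E2 b i l
            - BWE4_E2 b i j * BWE4_E2 b j k) else 0) else 0)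
        = if k = i then (3 * BWE4_E2 b i l - BWE4_E2 b i l * BWE4_E2 b i l
            - BWE4_E2 b i l * BWE4_E2 b l k) else 0 := by
      intro l k; split_ifs with h
      · simp [Finset.sum_ite_eq]
      · simp
    simp only [inner, Finset.sum_ite_eq', Finset.mem_univ, if_true]
    refine Finset.sum_congr rfl (fun l _ => ?_)
    rw [BWE4_E2_symm b l i, BWE4_E2_idem]
    have := BWE4_E2_idem b i l
    nlinarith [BWE4_E2_idem b i l]
  rw [hS1, hS2, hS3]
  have h2 : (∑ x : Fin N, 2 * (∑ j : Fin N, BWE4_E2 b x j) ^ 2)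
      = (∑ x : Fin N, d x * d x) + ∑ x : Fin N, d x * d x := by
    rw [← Finset.sum_add_distrib]
    exact Finset.sum_congr rfl fun i _ => by simp only [hd]; ring
  rw [h2]

lemma BWE4_d_count (b N : ℕ) (hb : 1 ≤ b) (hN : 2*b ≤ N) (i : Fin N) :
    (∑ j : Fin N, BWE4_E2 b i j)
      = ((min i.val (b-1) + min (N-1-i.val) (b-1) + 1 : ℕ) : ℝ) := by
  classical
  have h1 : (∑ j : Fin N, BWE4_E2 b i j)
      = ∑ t ∈ Finset.range N, (if |(i.val:ℤ) - (t:ℤ)| < b then (1:ℝ) else 0) := by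
    rw [← Fin.sum_univ_eq_sum_range (fun t => if |(i.val:ℤ) - (t:ℤ)| < b then (1:ℝ) else 0) N]
    rfl
  rw [h1, Finset.sum_boole]
  have h2 : Finset.filter (fun t : ℕ => |(i.val:ℤ) - (t:ℤ)| < b) (Finset.range N)
      = Finset.Ico (i.val - (b-1)) (min N (i.val + b)) := by
    ext t
    simp only [Finset.mem_filter, Finset.mem_range, Finset.mem_Ico, abs_lt]
    omega
  rw [h2, Nat.card_Ico]
  have hiN : i.val < N := i.isLt
  congr 1
  omega

lemma BWE4_count_sum (b N : ℕ) (hb : 1 ≤ b) (hN : 2*b ≤ N) :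
    (∑ t ∈ Finset.range N, (2 * ((min t (b-1) + min (N-1-t) (b-1) + 1 : ℕ):ℝ)^2
        + ((min t (b-1) + min (N-1-t) (b-1) + 1 : ℕ):ℝ)))
      = (24*(N:ℝ)*(b:ℝ)^2 - 18*(N:ℝ)*(b:ℝ) + 3*(N:ℝ)
          - 20*(b:ℝ)^3 + 27*(b:ℝ)^2 - 7*(b:ℝ))/3 := by
  set G : ℕ → ℝ := fun c => 2 * (c:ℝ)^2 + (c:ℝ) with hG
  have key : ∀ t, (2 * ((min t (b-1) + min (N-1-t) (b-1) + 1 : ℕ):ℝ)^2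
        + ((min t (b-1) + min (N-1-t) (b-1) + 1 : ℕ):ℝ)) = G (min t (b-1) + min (N-1-t) (b-1) + 1) :=
    fun t => rfl
  simp only [key]
  have hsplit1 : (∑ t ∈ Finset.Ico 0 (b-1), G (min t (b-1) + min (N-1-t) (b-1) + 1))
      + (∑ t ∈ Finset.Ico (b-1) N, G (min t (b-1) + min (N-1-t) (b-1) + 1))
      = ∑ t ∈ Finset.range N, G (min t (b-1) + min (N-1-t) (b-1) + 1) := by
    rw [Finset.range_eq_Ico]
    exact Finset.sum_Ico_consecutive _ (by omega) (by omega)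
  have hsplit2 : (∑ t ∈ Finset.Ico (b-1) (N-(b-1)), G (min t (b-1) + min (N-1-t) (b-1) + 1))
      + (∑ t ∈ Finset.Ico (N-(b-1)) N, G (min t (b-1) + min (N-1-t) (b-1) + 1))
      = ∑ t ∈ Finset.Ico (b-1) N, G (min t (b-1) + min (N-1-t) (b-1) + 1) :=
    Finset.sum_Ico_consecutive _ (by omega) (by omega)
  rw [← hsplit1, ← hsplit2]
  -- Piece 1
  have hP1 : (∑ t ∈ Finset.Ico 0 (b-1), G (min t (b-1) + min (N-1-t) (b-1) + 1))
      = ∑ t ∈ Finset.range (b-1), (2*(t:ℝ)^2 + (4*(b:ℝ)+1)*(t:ℝ) + (2*(b:ℝ)^2+(b:ℝ))) := by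
    rw [← Finset.range_eq_Ico]
    refine Finset.sum_congr rfl (fun t ht => ?_)
    rw [Finset.mem_range] at ht
    have h : min t (b-1) + min (N-1-t) (b-1) + 1 = t + b := by omega
    rw [h, hG]
    push_cast
    ring
  -- Piece 3
  have hP3 : (∑ t ∈ Finset.Ico (N-(b-1)) N, G (min t (b-1) + min (N-1-t) (b-1) + 1))
      = ∑ t ∈ Finset.range (b-1), (2*(t:ℝ)^2 + (4*(b:ℝ)+1)*(t:ℝ) + (2*(b:ℝ)^2+(b:ℝ))) := by
    refine Finset.sum_nbij' (fun t => N-1-t) (fun s => N-1-s) ?_ ?_ ?_ ?_ ?_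
    · intro a ha; rw [Finset.mem_Ico] at ha; rw [Finset.mem_range]; omega
    · intro a ha; rw [Finset.mem_range] at ha; rw [Finset.mem_Ico]; omega
    · intro a ha; rw [Finset.mem_Ico] at ha; omega
    · intro a ha; rw [Finset.mem_range] at ha; omega
    · intro a ha
      rw [Finset.mem_Ico] at ha
      have h : min a (b-1) + min (N-1-a) (b-1) + 1 = (N-1-a) + b := by omega
      rw [h]
      simp only [hG]
      have hcast : ((N-1-a+b : ℕ):ℝ) = ((N-1-a:ℕ):ℝ) + (b:ℝ) := by push_cast; ring
      rw [hcast]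
      ring
  -- Piece 2
  have hP2 : (∑ t ∈ Finset.Ico (b-1) (N-(b-1)), G (min t (b-1) + min (N-1-t) (b-1) + 1))
      = ((N:ℝ) - 2*(b:ℝ) + 2) * (2*(2*(b:ℝ)-1)^2 + (2*(b:ℝ)-1)) := by
    have hc : ∀ t ∈ Finset.Ico (b-1) (N-(b-1)),
        G (min t (b-1) + min (N-1-t) (b-1) + 1) = (2*(2*(b:ℝ)-1)^2 + (2*(b:ℝ)-1)) := by
      intro t ht
      rw [Finset.mem_Ico] at ht
      have h : min t (b-1) + min (N-1-t) (b-1) + 1 = 2*b-1 := by omega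
      rw [h]
      simp only [hG]
      have hcast : ((2*b-1 : ℕ):ℝ) = 2*(b:ℝ) - 1 := by
        rw [Nat.cast_sub (by omega)]; push_cast; ring
      rw [hcast]
    rw [Finset.sum_congr rfl hc, Finset.sum_const, Nat.card_Ico, nsmul_eq_mul]
    have hcard : ((N - (b-1) - (b-1) : ℕ):ℝ) = (N:ℝ) - 2*(b:ℝ) + 2 := by
      have h : N - (b-1) - (b-1) = N + 2 - 2*b := by omega
      rw [h, Nat.cast_sub (by omega)]
      push_cast; ring
    rw [hcard]
  rw [hP1, hP2, hP3, BWE4_poly_sum]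
  have hbm : ((b-1 : ℕ):ℝ) = (b:ℝ) - 1 := by
    rw [Nat.cast_sub hb]; norm_num
  rw [hbm]
  ring

lemma BWE4_band_iff {N b : ℕ} (i j : Fin N) :
    |(i:ℤ)-(j:ℤ)| < b ↔ (i.val < j.val + b ∧ j.val < i.val + b) := by
  rw [abs_lt]; omega

lemma BWE4_core {Ω : Type*} [MeasureSpace Ω] [IsProbabilityMeasure (ℙ : Measure Ω)] {N b : ℕ}
    (H : Ω → Matrix (Fin N) (Fin N) ℝ)
    (hmeas : ∀ i j, Measurable fun ω => H ω i j)
    (hindep : iIndepFun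
      (fun p : {p : Fin N × Fin N // p.1 ≤ p.2 ∧ |(p.1 : ℤ) - (p.2 : ℤ)| < b} =>
        fun ω => H ω p.1.1 p.1.2) ℙ)
    (e : {p : Fin N × Fin N // p.1 ≤ p.2 ∧ |(p.1 : ℤ) - (p.2 : ℤ)| < b} → ℕ)
    (s : Finset {p : Fin N × Fin N // p.1 ≤ p.2 ∧ |(p.1 : ℤ) - (p.2 : ℤ)| < b}) :
    ∫ ω, ∏ q ∈ s, (H ω q.1.1 q.1.2) ^ (e q) = ∏ q ∈ s, ∫ ω, (H ω q.1.1 q.1.2) ^ (e q) := by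
  exact BWE4_integral_prod
    (hindep.comp (fun q x => x ^ e q) (fun q => measurable_id.pow_const _))
    (fun q => (hmeas _ _).pow_const _) s

/-- For a four-moment Gaussian-matching real symmetric banded Wigner matrix of size
N = m·b (m ≥ 2) and bandwidth b, E[tr(H⁴)] = (24Nb² − 18Nb + 3N − 20b³ + 27b² − 7b)/3. -/
theorem expectation_trace_pow_four_banded
    {Ω : Type*} [MeasureSpace Ω] [IsProbabilityMeasure (ℙ : Measure Ω)]
    (N b m : ℕ) (hm : 2 ≤ m) (hN : N = m * b) (hb : 1 ≤ b)
    (H : Ω → Matrix (Fin N) (Fin N) ℝ)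
    (hmeas : ∀ i j, Measurable fun ω => H ω i j)
    (hsymm : ∀ ω, (H ω).IsSymm)
    (hband : ∀ ω, ∀ i j : Fin N, (b : ℤ) ≤ |(i : ℤ) - (j : ℤ)| → H ω i j = 0)
    (hindep : iIndepFun
      (fun p : {p : Fin N × Fin N // p.1 ≤ p.2 ∧ |(p.1 : ℤ) - (p.2 : ℤ)| < b} =>
        fun ω => H ω p.1.1 p.1.2) ℙ)
    (hmean : ∀ i j : Fin N, |(i : ℤ) - (j : ℤ)| < b → ∫ ω, H ω i j = 0)
    (hvar : ∀ i j : Fin N, |(i : ℤ) - (j : ℤ)| < b → ∫ ω, (H ω i j) ^ 2 = 1)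
    (hthird : ∀ i j : Fin N, |(i : ℤ) - (j : ℤ)| < b → ∫ ω, (H ω i j) ^ 3 = 0)
    (hfourth : ∀ i j : Fin N, |(i : ℤ) - (j : ℤ)| < b → ∫ ω, (H ω i j) ^ 4 = 3) :
    ∫ ω, Matrix.trace ((H ω) ^ 4)
      = (24 * (N : ℝ) * (b : ℝ) ^ 2 - 18 * (N : ℝ) * (b : ℝ) + 3 * (N : ℝ)
          - 20 * (b : ℝ) ^ 3 + 27 * (b : ℝ) ^ 2 - 7 * (b : ℝ)) / 3 := by
  classical
  have h2b : 2 * b ≤ N := hN ▸ Nat.mul_le_mul_right b hm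
  have hs : ∀ ω (a c : Fin N), H ω a c = H ω c a := fun ω a c => (hsymm ω).apply c a
  have hdd : ∀ x : Fin N, |(x:ℤ)-(x:ℤ)| < b := fun x => by
    rw [sub_self, abs_zero]; exact_mod_cast hb
  -- integrability of fourth powers
  have hint4 : ∀ a c : Fin N, Integrable (fun ω => (H ω a c)^4) ℙ := by
    intro a c
    by_cases hic : |(a:ℤ)-(c:ℤ)| < b
    · by_contra h
      have h3 := hfourth a c hic
      rw [integral_undef h] at h3
      norm_num at h3
    · have hz : (fun ω => (H ω a c)^4) = fun _ => (0:ℝ) := by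
        funext ω; rw [hband ω a c (not_lt.1 hic)]; norm_num
      rw [hz]; exact integrable_const 0
  -- integrability of each term of the trace expansion
  have hintA : ∀ i j k l : Fin N,
      Integrable (fun ω => H ω i j * H ω j k * H ω k l * H ω l i) ℙ := by
    intro i j k l
    have hmeasT : AEStronglyMeasurable (fun ω => H ω i j * H ω j k * H ω k l * H ω l i) ℙ :=
      ((((hmeas i j).mul (hmeas j k)).mul (hmeas k l)).mul (hmeas l i)).aestronglyMeasurable
    have hbound : Integrable
        (fun ω => (H ω i j)^4 + (H ω j k)^4 + (H ω k l)^4 + (H ω l i)^4) ℙ :=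
      (((hint4 i j).add (hint4 j k)).add (hint4 k l)).add (hint4 l i)
    refine hbound.mono hmeasT ?_
    filter_upwards with ω
    have h1 := BWE4_abs4 (H ω i j) (H ω j k) (H ω k l) (H ω l i)
    have h2 : (0:ℝ) ≤ (H ω i j)^4 + (H ω j k)^4 + (H ω k l)^4 + (H ω l i)^4 := by positivity
    rw [Real.norm_eq_abs, Real.norm_eq_abs]
    calc |H ω i j * H ω j k * H ω k l * H ω l i|
        ≤ (H ω i j)^4 + (H ω j k)^4 + (H ω k l)^4 + (H ω l i)^4 := h1
      _ ≤ |(H ω i j)^4 + (H ω j k)^4 + (H ω k l)^4 + (H ω l i)^4| := le_abs_self _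
  -- the key per-term expectation
  have hkey : ∀ i j k l : Fin N,
      (∫ ω, H ω i j * H ω j k * H ω k l * H ω l i) = BWE4_T b i j k l := by
    intro i j k l
    have hzero : ∀ (x y : Fin N), ¬(x.val < y.val + b ∧ y.val < x.val + b) →
        ∀ ω, H ω x y = 0 := by
      intro x y hxy ω
      refine hband ω x y ?_
      by_contra hcon
      exact hxy ((BWE4_band_iff x y).1 (not_le.1 hcon))
    have hT0 : (¬(i.val < j.val + b ∧ j.val < i.val + b)
        ∨ ¬(j.val < k.val + b ∧ k.val < j.val + b)
        ∨ ¬(k.val < l.val + b ∧ l.val < k.val + b)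
        ∨ ¬(l.val < i.val + b ∧ i.val < l.val + b)) → BWE4_T b i j k l = 0 := by
      intro hc
      unfold BWE4_T BWE4_E2
      simp only [BWE4_band_iff]
      split_ifs <;> first
        | rfl
        | (exfalso; simp only [Fin.ext_iff] at *; omega)
        | norm_num
    by_cases hbij : i.val < j.val + b ∧ j.val < i.val + b
    · by_cases hbjk : j.val < k.val + b ∧ k.val < j.val + b
      · by_cases hbkl : k.val < l.val + b ∧ l.val < k.val + b
        · by_cases hbli : l.val < i.val + b ∧ i.val < l.val + b
          · -- all factors in band
            have h1 : |(i:ℤ)-(j:ℤ)| < b := (BWE4_band_iff i j).2 hbij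
            have h2 : |(j:ℤ)-(k:ℤ)| < b := (BWE4_band_iff j k).2 hbjk
            have h3 : |(k:ℤ)-(l:ℤ)| < b := (BWE4_band_iff k l).2 hbkl
            have h4 : |(l:ℤ)-(i:ℤ)| < b := (BWE4_band_iff l i).2 hbli
            by_cases hik : i = k
            · subst hik
              by_cases hjl : j = l
              · subst hjl
                -- case A: fourth moment
                calc (∫ ω, H ω i j * H ω j i * H ω i j * H ω j i)
                    = ∫ ω, (H ω i j)^4 := by
                      congr 1; funext ω; rw [hs ω j i]; ring
                  _ = 3 := hfourth i j h1
                  _ = BWE4_T b i j i j := by simp [BWE4_T, BWE4_E2, h1]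
              · -- case B: (H i j)^2 (H i l)^2
                have hne : BWE4_canon i j h1 ≠ BWE4_canon i l h3 := by
                  intro hcon
                  rcases (BWE4_canon_eq_iff i j i l h1 h3).1 hcon with ⟨-, h⟩ | ⟨hA, hB⟩
                  · exact hjl h
                  · exact hjl (hB.trans hA)
                have hmain := BWE4_core H hmeas hindep (fun _ => 2)
                  {BWE4_canon i j h1, BWE4_canon i l h3}
                simp only [Finset.prod_pair hne] at hmain
                calc (∫ ω, H ω i j * H ω j i * H ω i l * H ω l i)
                    = ∫ ω, (H ω (BWE4_canon i j h1).1.1 (BWE4_canon i j h1).1.2)^2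
                        * (H ω (BWE4_canon i l h3).1.1 (BWE4_canon i l h3).1.2)^2 := by
                      congr 1; funext ω
                      rw [BWE4_canon_apply (H ω) (hs ω) i j h1,
                        BWE4_canon_apply (H ω) (hs ω) i l h3, hs ω j i, hs ω l i]
                      ring
                  _ = (∫ ω, (H ω (BWE4_canon i j h1).1.1 (BWE4_canon i j h1).1.2)^2)
                      * (∫ ω, (H ω (BWE4_canon i l h3).1.1 (BWE4_canon i l h3).1.2)^2) := hmain
                  _ = 1 * 1 := by
                      rw [hvar _ _ (BWE4_canon i j h1).2.2, hvar _ _ (BWE4_canon i l h3).2.2]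
                  _ = BWE4_T b i j i l := by simp [BWE4_T, BWE4_E2, h1, h3, hjl]
            · by_cases hjl : j = l
              · subst hjl
                -- case C: (H i j)^2 (H j k)^2
                have hne : BWE4_canon i j h1 ≠ BWE4_canon j k h2 := by
                  intro hcon
                  rcases (BWE4_canon_eq_iff i j j k h1 h2).1 hcon with ⟨hA, hB⟩ | ⟨hA, -⟩
                  · exact hik (hA.trans hB)
                  · exact hik hA
                have hmain := BWE4_core H hmeas hindep (fun _ => 2)
                  {BWE4_canon i j h1, BWE4_canon j k h2}
                simp only [Finset.prod_pair hne] at hmain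
                calc (∫ ω, H ω i j * H ω j k * H ω k j * H ω j i)
                    = ∫ ω, (H ω (BWE4_canon i j h1).1.1 (BWE4_canon i j h1).1.2)^2
                        * (H ω (BWE4_canon j k h2).1.1 (BWE4_canon j k h2).1.2)^2 := by
                      congr 1; funext ω
                      rw [BWE4_canon_apply (H ω) (hs ω) i j h1,
                        BWE4_canon_apply (H ω) (hs ω) j k h2, hs ω j i, hs ω k j]
                      ring
                  _ = (∫ ω, (H ω (BWE4_canon i j h1).1.1 (BWE4_canon i j h1).1.2)^2)
                      * (∫ ω, (H ω (BWE4_canon j k h2).1.1 (BWE4_canon j k h2).1.2)^2) := hmain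
                  _ = 1 * 1 := by
                      rw [hvar _ _ (BWE4_canon i j h1).2.2, hvar _ _ (BWE4_canon j k h2).2.2]
                  _ = BWE4_T b i j k j := by simp [BWE4_T, BWE4_E2, h1, h2, hik]
              · -- i ≠ k, j ≠ l
                have hik' : i.val ≠ k.val := fun h => hik (Fin.ext h)
                have hjl' : j.val ≠ l.val := fun h => hjl (Fin.ext h)
                by_cases hD1 : i = l ∧ j = k
                · obtain ⟨h5, h6⟩ := hD1
                  subst h5; subst h6
                  -- case D1: H i j * H j j * H j i * H i i
                  have hij : i ≠ j := hik
                  have hij' : i.val ≠ j.val := fun h => hij (Fin.ext h)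
                  have hne12 : BWE4_canon i j h1 ≠ BWE4_canon j j (hdd j) := by
                    rw [Ne, BWE4_canon_eq_iff]; simp only [Fin.ext_iff]; omega
                  have hne13 : BWE4_canon i j h1 ≠ BWE4_canon i i (hdd i) := by
                    rw [Ne, BWE4_canon_eq_iff]; simp only [Fin.ext_iff]; omega
                  have hne23 : BWE4_canon j j (hdd j) ≠ BWE4_canon i i (hdd i) := by
                    rw [Ne, BWE4_canon_eq_iff]; simp only [Fin.ext_iff]; omega
                  have hprodrw : ∀ (f : {p : Fin N × Fin N // p.1 ≤ p.2 ∧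
                        |(p.1 : ℤ) - (p.2 : ℤ)| < b} → ℝ),
                      (∏ q ∈ ({BWE4_canon i j h1, BWE4_canon j j (hdd j),
                        BWE4_canon i i (hdd i)} : Finset _), f q)
                        = f (BWE4_canon i j h1) * (f (BWE4_canon j j (hdd j))
                            * f (BWE4_canon i i (hdd i))) := by
                    intro f
                    rw [Finset.prod_insert (by simp [hne12, hne13]), Finset.prod_pair hne23]
                  have hmain := BWE4_core H hmeas hindep
                    (fun q => if q = BWE4_canon i j h1 then 2 else 1)
                    {BWE4_canon i j h1, BWE4_canon j j (hdd j), BWE4_canon i i (hdd i)}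
                  simp only [hprodrw, if_pos rfl, if_neg (Ne.symm hne12),
                    if_neg (Ne.symm hne13), pow_one] at hmain
                  calc (∫ ω, H ω i j * H ω j j * H ω j i * H ω i i)
                      = ∫ ω, (H ω (BWE4_canon i j h1).1.1 (BWE4_canon i j h1).1.2)^2
                          * ((H ω (BWE4_canon j j (hdd j)).1.1 (BWE4_canon j j (hdd j)).1.2)
                            * (H ω (BWE4_canon i i (hdd i)).1.1 (BWE4_canon i i (hdd i)).1.2)) := by
                        congr 1; funext ω
                        rw [BWE4_canon_apply (H ω) (hs ω) i j h1,
                          BWE4_canon_apply (H ω) (hs ω) j j (hdd j),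
                          BWE4_canon_apply (H ω) (hs ω) i i (hdd i), hs ω j i]
                        ring
                    _ = (∫ ω, (H ω (BWE4_canon i j h1).1.1 (BWE4_canon i j h1).1.2)^2)
                        * ((∫ ω, H ω (BWE4_canon j j (hdd j)).1.1 (BWE4_canon j j (hdd j)).1.2)
                          * (∫ ω, H ω (BWE4_canon i i (hdd i)).1.1 (BWE4_canon i i (hdd i)).1.2)) := hmain
                    _ = 0 := by
                        rw [hmean _ _ (BWE4_canon j j (hdd j)).2.2]; ring
                    _ = BWE4_T b i j j i := by
                        unfold BWE4_T
                        rw [if_neg hik, if_neg (Ne.symm hik)]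
                · by_cases hD2 : j = i ∧ k = l
                  · obtain ⟨h5, h6⟩ := hD2
                    subst h5; subst h6
                    -- case D2: H j j * H j k * H k k * H k j  (here i was replaced by j)
                    have hjk' : j.val ≠ k.val := hik'
                    have hne12 : BWE4_canon j k h2 ≠ BWE4_canon j j (hdd j) := by
                      rw [Ne, BWE4_canon_eq_iff]; simp only [Fin.ext_iff]; omega
                    have hne13 : BWE4_canon j k h2 ≠ BWE4_canon k k (hdd k) := by
                      rw [Ne, BWE4_canon_eq_iff]; simp only [Fin.ext_iff]; omega
                    have hne23 : BWE4_canon j j (hdd j) ≠ BWE4_canon k k (hdd k) := by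
                      rw [Ne, BWE4_canon_eq_iff]; simp only [Fin.ext_iff]; omega
                    have hprodrw : ∀ (f : {p : Fin N × Fin N // p.1 ≤ p.2 ∧
                          |(p.1 : ℤ) - (p.2 : ℤ)| < b} → ℝ),
                        (∏ q ∈ ({BWE4_canon j k h2, BWE4_canon j j (hdd j),
                          BWE4_canon k k (hdd k)} : Finset _), f q)
                          = f (BWE4_canon j k h2) * (f (BWE4_canon j j (hdd j))
                              * f (BWE4_canon k k (hdd k))) := by
                      intro f
                      rw [Finset.prod_insert (by simp [hne12, hne13]), Finset.prod_pair hne23]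
                    have hmain := BWE4_core H hmeas hindep
                      (fun q => if q = BWE4_canon j k h2 then 2 else 1)
                      {BWE4_canon j k h2, BWE4_canon j j (hdd j), BWE4_canon k k (hdd k)}
                    simp only [hprodrw, if_pos rfl, if_neg (Ne.symm hne12),
                      if_neg (Ne.symm hne13), pow_one] at hmain
                    calc (∫ ω, H ω j j * H ω j k * H ω k k * H ω k j)
                        = ∫ ω, (H ω (BWE4_canon j k h2).1.1 (BWE4_canon j k h2).1.2)^2
                            * ((H ω (BWE4_canon j j (hdd j)).1.1 (BWE4_canon j j (hdd j)).1.2)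
                              * (H ω (BWE4_canon k k (hdd k)).1.1 (BWE4_canon k k (hdd k)).1.2)) := by
                          congr 1; funext ω
                          rw [BWE4_canon_apply (H ω) (hs ω) j k h2,
                            BWE4_canon_apply (H ω) (hs ω) j j (hdd j),
                            BWE4_canon_apply (H ω) (hs ω) k k (hdd k), hs ω k j]
                          ring
                      _ = (∫ ω, (H ω (BWE4_canon j k h2).1.1 (BWE4_canon j k h2).1.2)^2)
                          * ((∫ ω, H ω (BWE4_canon j j (hdd j)).1.1 (BWE4_canon j j (hdd j)).1.2)
                            * (∫ ω, H ω (BWE4_canon k k (hdd k)).1.1 (BWE4_canon k k (hdd k)).1.2)) := hmain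
                      _ = 0 := by
                          rw [hmean _ _ (BWE4_canon j j (hdd j)).2.2]; ring
                      _ = BWE4_T b j j k k := by
                          unfold BWE4_T
                          rw [if_neg hik, if_neg hik]
                  · -- case D3: four distinct edges
                    have hD1' : ¬(i.val = l.val ∧ j.val = k.val) :=
                      fun ⟨a, c⟩ => hD1 ⟨Fin.ext a, Fin.ext c⟩
                    have hD2' : ¬(j.val = i.val ∧ k.val = l.val) :=
                      fun ⟨a, c⟩ => hD2 ⟨Fin.ext a, Fin.ext c⟩
                    have hne12 : BWE4_canon i j h1 ≠ BWE4_canon j k h2 := by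
                      rw [Ne, BWE4_canon_eq_iff]; simp only [Fin.ext_iff]; omega
                    have hne13 : BWE4_canon i j h1 ≠ BWE4_canon k l h3 := by
                      rw [Ne, BWE4_canon_eq_iff]; simp only [Fin.ext_iff]; omega
                    have hne14 : BWE4_canon i j h1 ≠ BWE4_canon l i h4 := by
                      rw [Ne, BWE4_canon_eq_iff]; simp only [Fin.ext_iff]; omega
                    have hne23 : BWE4_canon j k h2 ≠ BWE4_canon k l h3 := by
                      rw [Ne, BWE4_canon_eq_iff]; simp only [Fin.ext_iff]; omega
                    have hne24 : BWE4_canon j k h2 ≠ BWE4_canon l i h4 := by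
                      rw [Ne, BWE4_canon_eq_iff]; simp only [Fin.ext_iff]; omega
                    have hne34 : BWE4_canon k l h3 ≠ BWE4_canon l i h4 := by
                      rw [Ne, BWE4_canon_eq_iff]; simp only [Fin.ext_iff]; omega
                    have hprodrw : ∀ (f : {p : Fin N × Fin N // p.1 ≤ p.2 ∧
                          |(p.1 : ℤ) - (p.2 : ℤ)| < b} → ℝ),
                        (∏ q ∈ ({BWE4_canon i j h1, BWE4_canon j k h2, BWE4_canon k l h3,
                          BWE4_canon l i h4} : Finset _), f q)
                          = f (BWE4_canon i j h1) * (f (BWE4_canon j k h2)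
                              * (f (BWE4_canon k l h3) * f (BWE4_canon l i h4))) := by
                      intro f
                      rw [Finset.prod_insert (by simp [hne12, hne13, hne14]),
                        Finset.prod_insert (by simp [hne23, hne24]), Finset.prod_pair hne34]
                    have hmain := BWE4_core H hmeas hindep (fun _ => 1)
                      {BWE4_canon i j h1, BWE4_canon j k h2, BWE4_canon k l h3,
                        BWE4_canon l i h4}
                    simp only [hprodrw, pow_one] at hmain
                    calc (∫ ω, H ω i j * H ω j k * H ω k l * H ω l i)
                        = ∫ ω, H ω (BWE4_canon i j h1).1.1 (BWE4_canon i j h1).1.2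
                            * (H ω (BWE4_canon j k h2).1.1 (BWE4_canon j k h2).1.2
                              * (H ω (BWE4_canon k l h3).1.1 (BWE4_canon k l h3).1.2
                                * H ω (BWE4_canon l i h4).1.1 (BWE4_canon l i h4).1.2)) := by
                          congr 1; funext ω
                          rw [BWE4_canon_apply (H ω) (hs ω) i j h1,
                            BWE4_canon_apply (H ω) (hs ω) j k h2,
                            BWE4_canon_apply (H ω) (hs ω) k l h3,
                            BWE4_canon_apply (H ω) (hs ω) l i h4]
                          ring
                      _ = (∫ ω, H ω (BWE4_canon i j h1).1.1 (BWE4_canon i j h1).1.2)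
                          * ((∫ ω, H ω (BWE4_canon j k h2).1.1 (BWE4_canon j k h2).1.2)
                            * ((∫ ω, H ω (BWE4_canon k l h3).1.1 (BWE4_canon k l h3).1.2)
                              * (∫ ω, H ω (BWE4_canon l i h4).1.1 (BWE4_canon l i h4).1.2))) := hmain
                      _ = 0 := by
                          rw [hmean _ _ (BWE4_canon i j h1).2.2]; ring
                      _ = BWE4_T b i j k l := by
                          unfold BWE4_T
                          rw [if_neg hik, if_neg hjl]
          · -- H l i ≡ 0
            rw [hT0 (Or.inr (Or.inr (Or.inr hbli)))]
            have hz := hzero l i hbli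
            simp only [hz, mul_zero]
            exact integral_zero _ _
        · rw [hT0 (Or.inr (Or.inr (Or.inl hbkl)))]
          have hz := hzero k l hbkl
          simp only [hz, mul_zero, zero_mul]
          exact integral_zero _ _
      · rw [hT0 (Or.inr (Or.inl hbjk))]
        have hz := hzero j k hbjk
        simp only [hz, mul_zero, zero_mul]
        exact integral_zero _ _
    · rw [hT0 (Or.inl hbij)]
      have hz := hzero i j hbij
      simp only [hz, zero_mul]
      exact integral_zero _ _
  -- trace expansion
  have hexp : ∀ ω, Matrix.trace ((H ω)^4)
      = ∑ i : Fin N, ∑ l : Fin N, ∑ k : Fin N, ∑ j : Fin N,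
          H ω i j * H ω j k * H ω k l * H ω l i := by
    intro ω
    rw [show (H ω)^4 = H ω * H ω * H ω * H ω from by
      rw [pow_succ, pow_succ, pow_succ, pow_one]]
    simp only [Matrix.trace, Matrix.diag, Matrix.mul_apply, Finset.sum_mul, Finset.mul_sum]
  have hint3 : ∀ i l k : Fin N,
      Integrable (fun ω => ∑ j : Fin N, H ω i j * H ω j k * H ω k l * H ω l i) ℙ :=
    fun i l k => integrable_finset_sum _ (fun j _ => hintA i j k l)
  have hint2 : ∀ i l : Fin N,
      Integrable (fun ω => ∑ k : Fin N, ∑ j : Fin N, H ω i j * H ω j k * H ω k l * H ω l i) ℙ :=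
    fun i l => integrable_finset_sum _ (fun k _ => hint3 i l k)
  have hint1 : ∀ i : Fin N,
      Integrable (fun ω => ∑ l : Fin N, ∑ k : Fin N, ∑ j : Fin N,
        H ω i j * H ω j k * H ω k l * H ω l i) ℙ :=
    fun i => integrable_finset_sum _ (fun l _ => hint2 i l)
  calc (∫ ω, Matrix.trace ((H ω)^4))
      = ∫ ω, ∑ i : Fin N, ∑ l : Fin N, ∑ k : Fin N, ∑ j : Fin N,
          H ω i j * H ω j k * H ω k l * H ω l i := by
        congr 1; funext ω; exact hexp ω
    _ = ∑ i : Fin N, ∑ l : Fin N, ∑ k : Fin N, ∑ j : Fin N, BWE4_T b i j k l := by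
        rw [integral_finset_sum _ (fun i _ => hint1 i)]
        refine Finset.sum_congr rfl fun i _ => ?_
        rw [integral_finset_sum _ (fun l _ => hint2 i l)]
        refine Finset.sum_congr rfl fun l _ => ?_
        rw [integral_finset_sum _ (fun k _ => hint3 i l k)]
        refine Finset.sum_congr rfl fun k _ => ?_
        rw [integral_finset_sum _ (fun j _ => hintA i j k l)]
        refine Finset.sum_congr rfl fun j _ => ?_
        exact hkey i j k l
    _ = ∑ i : Fin N, (2 * (∑ j : Fin N, BWE4_E2 b i j)^2 + ∑ j : Fin N, BWE4_E2 b i j) :=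
        BWE4_T_sum b N
    _ = ∑ t ∈ Finset.range N, (2 * ((min t (b-1) + min (N-1-t) (b-1) + 1 : ℕ):ℝ)^2
          + ((min t (b-1) + min (N-1-t) (b-1) + 1 : ℕ):ℝ)) := by
        rw [← Fin.sum_univ_eq_sum_range
          (fun t => 2 * ((min t (b-1) + min (N-1-t) (b-1) + 1 : ℕ):ℝ)^2
            + ((min t (b-1) + min (N-1-t) (b-1) + 1 : ℕ):ℝ)) N]
        refine Finset.sum_congr rfl fun i _ => ?_
        rw [BWE4_d_count b N hb h2b i]
    _ = (24 * (N : ℝ) * (b : ℝ) ^ 2 - 18 * (N : ℝ) * (b : ℝ) + 3 * (N : ℝ)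
          - 20 * (b : ℝ) ^ 3 + 27 * (b : ℝ) ^ 2 - 7 * (b : ℝ)) / 3 :=
        BWE4_count_sum b N hb h2b
end
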